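/- arXiv:math/0509327 — 2 statements merged into one kernel-verified Lean document; each statement's English description precedes it below -/
import Mathlib

section
/- Let A : H1 → H2 be (S,T)-complementable. Then R(A/(S,T)) = R(A) ∩ T and N(A/(S,T)) = S⊥ + N(A). -/
set_option maxHeartbeats 1000000
set_option synthInstance.maxHeartbeats 1000000

open ContinuousLinearMap Submodule

noncomputable def projC {H : Type*} [NormedAddCommGroup H] [InnerProductSpace ℂ H]
    [CompleteSpace H] (S : Submodule ℂ H) [CompleteSpace S] : H →L[ℂ] H :=
  S.subtypeL ∘L orthogonalProjection S

variable {H₁ H₂ : Type*} [NormedAddCommGroup H₁] [InnerProductSpace ℂ H₁] [CompleteSpace H₁]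
  [NormedAddCommGroup H₂] [InnerProductSpace ℂ H₂] [CompleteSpace H₂]

noncomputable def blk11 (S : Submodule ℂ H₁) [CompleteSpace S]
    (T : Submodule ℂ H₂) [CompleteSpace T] (A : H₁ →L[ℂ] H₂) : H₁ →L[ℂ] H₂ :=
  projC T ∘L A ∘L projC S

noncomputable def blk12 (S : Submodule ℂ H₁) [CompleteSpace S]
    (T : Submodule ℂ H₂) [CompleteSpace T] (A : H₁ →L[ℂ] H₂) : H₁ →L[ℂ] H₂ :=
  projC T ∘L A ∘L (1 - projC S)

noncomputable def blk21 (S : Submodule ℂ H₁) [CompleteSpace S]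
    (T : Submodule ℂ H₂) [CompleteSpace T] (A : H₁ →L[ℂ] H₂) : H₁ →L[ℂ] H₂ :=
  (1 - projC T) ∘L A ∘L projC S

noncomputable def blk22 (S : Submodule ℂ H₁) [CompleteSpace S]
    (T : Submodule ℂ H₂) [CompleteSpace T] (A : H₁ →L[ℂ] H₂) : H₁ →L[ℂ] H₂ :=
  (1 - projC T) ∘L A ∘L (1 - projC S)

/-- `As` is the bilateral shorted operator `A/(S,T)`: there are `Bh = |A22|^(1/2)`,
`Dh = |A22*|^(1/2)` (unique positive fourth roots of `A22* A22` resp. `A22 A22*`),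
`U` the partial isometry of the polar decomposition of `A22`, and `E`, `F` the reduced
Douglas solutions of `A21 = |A22*|^(1/2) U X` and `A12* = |A22|^(1/2) X`, with
`As = A11 - F* E`. -/
def IsShorted (S : Submodule ℂ H₁) [CompleteSpace S] (T : Submodule ℂ H₂) [CompleteSpace T]
    (A As : H₁ →L[ℂ] H₂) : Prop :=
  ∃ (Bh : H₁ →L[ℂ] H₁) (Dh : H₂ →L[ℂ] H₂) (U : H₁ →L[ℂ] H₂) (E : H₁ →L[ℂ] H₁)
      (F : H₂ →L[ℂ] H₁),
    Bh.IsPositive ∧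
    Bh ∘L Bh ∘L Bh ∘L Bh = adjoint (blk22 S T A) ∘L blk22 S T A ∧
    Dh.IsPositive ∧
    Dh ∘L Dh ∘L Dh ∘L Dh = blk22 S T A ∘L adjoint (blk22 S T A) ∧
    blk22 S T A = U ∘L (Bh ∘L Bh) ∧
    (∀ x, blk22 S T A x = 0 → U x = 0) ∧
    (Dh ∘L U) ∘L E = blk21 S T A ∧
    LinearMap.range (E : H₁ →ₗ[ℂ] H₁) ≤ (LinearMap.ker ((Dh ∘L U : H₁ →L[ℂ] H₂) : H₁ →ₗ[ℂ] H₂))ᗮ ∧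
    Bh ∘L F = adjoint (blk12 S T A) ∧
    LinearMap.range (F : H₂ →ₗ[ℂ] H₁) ≤ (LinearMap.ker (Bh : H₁ →ₗ[ℂ] H₁))ᗮ ∧
    As = blk11 S T A - adjoint F ∘L E

/-- `A` is `(S,T)`-complementable. -/
def IsComplementable (S : Submodule ℂ H₁) [CompleteSpace S] (T : Submodule ℂ H₂)
    [CompleteSpace T] (A : H₁ →L[ℂ] H₂) : Prop :=
  LinearMap.range (blk21 S T A : H₁ →ₗ[ℂ] H₂) ≤ LinearMap.range (blk22 S T A : H₁ →ₗ[ℂ] H₂) ∧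
  LinearMap.range (adjoint (blk12 S T A) : H₂ →ₗ[ℂ] H₁) ≤ LinearMap.range (adjoint (blk22 S T A) : H₂ →ₗ[ℂ] H₁)

namespace ShortedAux

variable {H K : Type*} [NormedAddCommGroup H] [InnerProductSpace ℂ H] [CompleteSpace H]
  [NormedAddCommGroup K] [InnerProductSpace ℂ K] [CompleteSpace K]

local notation "⟪" x ", " y "⟫" => @inner ℂ _ _ x y

lemma move {p : H →L[ℂ] H} (hsa : adjoint p = p) (x y : H) :
    ⟪p x, y⟫ = ⟪x, p y⟫ := by
  conv_lhs => rw [← hsa]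
  exact adjoint_inner_left p y x

lemma comp_self_isPositive {p : H →L[ℂ] H} (hp : p.IsPositive) : (p ∘L p).IsPositive := by
  have hsa := isSelfAdjoint_iff'.mp hp.isSelfAdjoint
  refine isPositive_def'.mpr ⟨isSelfAdjoint_iff'.mpr (by rw [adjoint_comp, hsa]), fun x => ?_⟩
  have h : ⟪(p ∘L p) x, x⟫ = ⟪p x, p x⟫ := by
    rw [comp_apply]; exact move hsa (p x) x
  simp only [reApplyInnerSelf, h]
  exact inner_self_nonneg

lemma pos_sq_inj {p q : H →L[ℂ] H} (hp : p.IsPositive) (hq : q.IsPositive)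
    (h : p ∘L p = q ∘L q) : p = q := by
  have hp' : (0 : H →L[ℂ] H) ≤ p := (nonneg_iff_isPositive p).mpr hp
  have hq' : (0 : H →L[ℂ] H) ≤ q := (nonneg_iff_isPositive q).mpr hq
  have h' : p * p = q * q := h
  calc p = CFC.sqrt (p * p) := (CFC.sqrt_mul_self p hp').symm
  _ = CFC.sqrt (q * q) := by rw [h']
  _ = q := CFC.sqrt_mul_self q hq'

lemma pos_pow4_inj {p q : H →L[ℂ] H} (hp : p.IsPositive) (hq : q.IsPositive)
    (h : ∀ x, p (p (p (p x))) = q (q (q (q x)))) : p = q := by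
  apply pos_sq_inj hp hq
  apply pos_sq_inj (comp_self_isPositive hp) (comp_self_isPositive hq)
  ext x
  simpa [comp_apply] using h x

/-- The heart of the matter: from the polar-decomposition-style axioms we get
`U† ∘ Dh ∘ U = Bh` and `U† ∘ C = Bh²`. -/
lemma key_UDU {C : H →L[ℂ] K} {Bh : H →L[ℂ] H} {Dh : K →L[ℂ] K} {U : H →L[ℂ] K}
    (hBpos : Bh.IsPositive)
    (hB4 : ∀ x, Bh (Bh (Bh (Bh x))) = adjoint C (C x))
    (hDpos : Dh.IsPositive)
    (hD4 : ∀ y, Dh (Dh (Dh (Dh y))) = C (adjoint C y))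
    (hpol : ∀ x, C x = U (Bh (Bh x)))
    (hU0 : ∀ x, C x = 0 → U x = 0) :
    (∀ x, adjoint U (Dh (U x)) = Bh x) ∧ (∀ x, adjoint U (C x) = Bh (Bh x)) := by
  have hBsa := isSelfAdjoint_iff'.mp hBpos.isSelfAdjoint
  have hDsa := isSelfAdjoint_iff'.mp hDpos.isSelfAdjoint
  -- inner products of C-images computed via Bh
  have hCC : ∀ x y, ⟪C x, C y⟫ = ⟪Bh (Bh x), Bh (Bh y)⟫ := by
    intro x y
    rw [← adjoint_inner_right, ← hB4, move hBsa (Bh x) (Bh (Bh y)),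
      move hBsa x (Bh (Bh (Bh y)))]
  have hDD : ∀ y z, ⟪adjoint C y, adjoint C z⟫ = ⟪Dh (Dh y), Dh (Dh z)⟫ := by
    intro y z
    rw [adjoint_inner_left, ← hD4, move hDsa (Dh y) (Dh (Dh z)),
      move hDsa y (Dh (Dh (Dh z)))]
  -- kernel facts
  have kerBh2 : ∀ x, Bh (Bh x) = 0 → Bh x = 0 := by
    intro x h
    have h1 : ⟪Bh x, Bh x⟫ = 0 := by
      rw [move hBsa x (Bh x), h, inner_zero_right]
    exact inner_self_eq_zero.mp h1
  have kerDh2 : ∀ y, Dh (Dh y) = 0 → Dh y = 0 := by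
    intro y h
    have h1 : ⟪Dh y, Dh y⟫ = 0 := by
      rw [move hDsa y (Dh y), h, inner_zero_right]
    exact inner_self_eq_zero.mp h1
  have kerBh_C : ∀ x, Bh x = 0 → C x = 0 := by
    intro x h
    have h1 : ⟪C x, C x⟫ = 0 := by rw [hCC, h, map_zero, inner_zero_right]
    exact inner_self_eq_zero.mp h1
  have kerCadj_Dh : ∀ y, adjoint C y = 0 → Dh y = 0 := by
    intro y h
    apply kerDh2
    have h1 : ⟪Dh (Dh y), Dh (Dh y)⟫ = 0 := by rw [← hDD, h, inner_zero_right]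
    exact inner_self_eq_zero.mp h1
  have kerDh_Cadj : ∀ y, Dh y = 0 → adjoint C y = 0 := by
    intro y h
    have h1 : ⟪adjoint C y, adjoint C y⟫ = 0 := by
      rw [hDD, h, map_zero, inner_zero_right]
    exact inner_self_eq_zero.mp h1
  have hUB : ∀ x, Bh x = 0 → U x = 0 := fun x h => hU0 x (kerBh_C x h)
  -- U†U fixes the range of Bh²
  have hUUB : ∀ x, adjoint U (U (Bh (Bh x))) = Bh (Bh x) := by
    intro x
    set e := adjoint U (U (Bh (Bh x))) - Bh (Bh x) with he
    have h1 : ∀ y, ⟪e, Bh (Bh y)⟫ = 0 := by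
      intro y
      rw [he, inner_sub_left, adjoint_inner_left, ← hpol x, ← hpol y, hCC, sub_self]
    have hBe : Bh e = 0 := by
      apply kerBh2
      have h2 : ⟪Bh (Bh e), Bh (Bh e)⟫ = 0 := by
        rw [move hBsa (Bh e) (Bh (Bh e)), move hBsa e (Bh (Bh (Bh e)))]
        exact h1 (Bh (Bh e))
      exact inner_self_eq_zero.mp h2
    have h3 : ⟪e, e⟫ = 0 := by
      nth_rewrite 1 [he]
      rw [inner_sub_left, adjoint_inner_left, hUB e hBe, inner_zero_right,
        move hBsa (Bh x) e, hBe, inner_zero_right, sub_self]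
    have h4 : e = 0 := inner_self_eq_zero.mp h3
    rw [he] at h4
    exact sub_eq_zero.mp h4
  have hUC : ∀ x, adjoint U (C x) = Bh (Bh x) := by
    intro x; rw [hpol x]; exact hUUB x
  -- C† ∘ U = Bh²
  have hCU : ∀ y, adjoint C (U y) = Bh (Bh y) := by
    intro y
    apply ext_inner_right ℂ
    intro z
    rw [adjoint_inner_left, hpol z, ← adjoint_inner_right, hUUB z,
      move hBsa (Bh y) z, move hBsa y (Bh z)]
  -- Bh² ∘ U† = C†
  have hBU : ∀ z, Bh (Bh (adjoint U z)) = adjoint C z := by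
    intro z
    apply ext_inner_right ℂ
    intro w
    rw [move hBsa (Bh (adjoint U z)) w, move hBsa (adjoint U z) (Bh w),
      adjoint_inner_left, ← hpol w, adjoint_inner_left]
  -- U† kills ker Dh
  have hUadj0 : ∀ k, Dh k = 0 → adjoint U k = 0 := by
    intro k hk
    have hCk : adjoint C k = 0 := kerDh_Cadj k hk
    have hBf : Bh (adjoint U k) = 0 := by
      apply kerBh2
      rw [hBU k, hCk]
    have h1 : ⟪adjoint U k, adjoint U k⟫ = 0 := by
      rw [adjoint_inner_left, hUB _ hBf, inner_zero_right]
    exact inner_self_eq_zero.mp h1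
  -- UU† fixes the range of Dh
  have hUUD : ∀ y, U (adjoint U (Dh y)) = Dh y := by
    intro y
    set e := U (adjoint U (Dh y)) - Dh y with he
    have h1 : adjoint C e = 0 := by
      rw [he, map_sub, hCU, hBU (Dh y), sub_self]
    have hDe : Dh e = 0 := kerCadj_Dh e h1
    have h2 : ⟪e, e⟫ = 0 := by
      nth_rewrite 1 [he]
      rw [inner_sub_left, ← adjoint_inner_right, hUadj0 e hDe, inner_zero_right,
        move hDsa y e, hDe, inner_zero_right, sub_self]
    have h3 : e = 0 := inner_self_eq_zero.mp h2
    rw [he] at h3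
    exact sub_eq_zero.mp h3
  -- finally, G := U† Dh U equals Bh by uniqueness of positive fourth roots
  set G : H →L[ℂ] H := adjoint U ∘L Dh ∘L U with hGdef
  have hGapp : ∀ x, G x = adjoint U (Dh (U x)) := fun x => rfl
  have hGpos : G.IsPositive := hDpos.adjoint_conj U
  have hG2 : ∀ x, G (G x) = adjoint U (Dh (Dh (U x))) := by
    intro x
    rw [hGapp, hGapp, hUUD (U x)]
  have hG4 : ∀ x, G (G (G (G x))) = Bh (Bh (Bh (Bh x))) := by
    intro x
    rw [hG2, hG2, hUUD (Dh (U x)), hD4 (U x), hCU x, hUC (Bh (Bh x))]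
  have hGB : G = Bh := pos_pow4_inj hGpos hBpos hG4
  refine ⟨fun x => ?_, hUC⟩
  rw [← hGapp, hGB]

end ShortedAux

open ShortedAux
theorem range_and_ker_of_shorted
    (S : Submodule ℂ H₁) [CompleteSpace S] (T : Submodule ℂ H₂) [CompleteSpace T]
    (A As : H₁ →L[ℂ] H₂) (hc : IsComplementable S T A) (hAs : IsShorted S T A As) :
    LinearMap.range (As : H₁ →ₗ[ℂ] H₂) = LinearMap.range (A : H₁ →ₗ[ℂ] H₂) ⊓ T ∧
    LinearMap.ker (As : H₁ →ₗ[ℂ] H₂) = Sᗮ ⊔ LinearMap.ker (A : H₁ →ₗ[ℂ] H₂) := by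
  obtain ⟨Bh, Dh, U, E, F, hBpos, hB4, hDpos, hD4, hPolar, hUker, hE, hErange, hF,
    hFrange, hAsdef⟩ := hAs
  have hBsa := isSelfAdjoint_iff'.mp hBpos.isSelfAdjoint
  -- projection facts
  have hPmem : ∀ x, projC S x ∈ S := fun x => (orthogonalProjection S x).2
  have hQmem : ∀ y, projC T y ∈ T := fun y => (orthogonalProjection T y).2
  have hPeq : ∀ {x}, x ∈ S → projC S x = x := fun {x} hx =>
    Submodule.starProjection_eq_self_iff.mpr hx
  have hQeq : ∀ {y}, y ∈ T → projC T y = y := fun {y} hy =>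
    Submodule.starProjection_eq_self_iff.mpr hy
  have hPP : ∀ x, projC S (projC S x) = projC S x := fun x => hPeq (hPmem x)
  have hPzero : ∀ {x}, x ∈ Sᗮ → projC S x = 0 := by
    intro x hx
    show (orthogonalProjection S x : H₁) = 0
    rw [Submodule.orthogonalProjectionOnto_apply_of_mem_orthogonal hx]
    simp
  have hPsub : ∀ x, x - projC S x ∈ Sᗮ := fun x =>
    Submodule.sub_starProjection_mem_orthogonal x
  -- pointwise block formulas
  have h11 : ∀ x, blk11 S T A x = projC T (A (projC S x)) := fun x => rfl
  have h12 : ∀ x, blk12 S T A x = projC T (A (x - projC S x)) := fun x => by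
    simp only [blk12, comp_apply, sub_apply, one_apply]; rfl
  have h21 : ∀ x, blk21 S T A x = A (projC S x) - projC T (A (projC S x)) := fun x => by
    simp only [blk21, comp_apply, sub_apply, one_apply]; rfl
  have h22 : ∀ x, blk22 S T A x =
      A (x - projC S x) - projC T (A (x - projC S x)) := fun x => by
    simp only [blk22, comp_apply, sub_apply, one_apply]; rfl
  -- pointwise versions of the operator hypotheses
  have hB4' : ∀ x, Bh (Bh (Bh (Bh x))) = adjoint (blk22 S T A) (blk22 S T A x) := fun x => by
    simpa [comp_apply] using ContinuousLinearMap.ext_iff.mp hB4 x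
  have hD4' : ∀ y, Dh (Dh (Dh (Dh y))) = blk22 S T A (adjoint (blk22 S T A) y) := fun y => by
    simpa [comp_apply] using ContinuousLinearMap.ext_iff.mp hD4 y
  have hpol' : ∀ x, blk22 S T A x = U (Bh (Bh x)) := fun x => by
    simpa [comp_apply] using ContinuousLinearMap.ext_iff.mp hPolar x
  have hE' : ∀ x, Dh (U (E x)) = blk21 S T A x := fun x => by
    simpa [comp_apply] using ContinuousLinearMap.ext_iff.mp hE x
  have hF' : ∀ y, Bh (F y) = adjoint (blk12 S T A) y := fun y => by
    simpa [comp_apply] using ContinuousLinearMap.ext_iff.mp hF y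
  have hAs' : ∀ x, As x = projC T (A (projC S x)) - adjoint F (E x) := fun x => by
    rw [hAsdef]
    simp only [sub_apply, comp_apply, h11]
  -- the key polar facts
  obtain ⟨hkey1, hkey2⟩ := key_UDU hBpos hB4' hDpos hD4' hpol' hUker
  -- F† ∘ Bh = blk12
  have hFB : ∀ y, adjoint F (Bh y) = blk12 S T A y := by
    intro y
    apply ext_inner_right ℂ
    intro z
    rw [adjoint_inner_left, move hBsa y (F z), hF' z, adjoint_inner_right]
  -- F† kills ker Bh
  have hFker : ∀ k, Bh k = 0 → adjoint F k = 0 := by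
    intro k hk
    have h1 : ∀ z, @inner ℂ _ _ (adjoint F k) z = 0 := by
      intro z
      rw [adjoint_inner_left]
      exact inner_right_of_mem_orthogonal (LinearMap.mem_ker.mpr hk)
        (hFrange ⟨z, rfl⟩)
    exact inner_self_eq_zero.mp (h1 (adjoint F k))
  -- E kills ker blk21
  have hEker : ∀ x, blk21 S T A x = 0 → E x = 0 := by
    intro x hx
    have hmem : E x ∈ LinearMap.ker ((Dh ∘L U : H₁ →L[ℂ] H₂) : H₁ →ₗ[ℂ] H₂) := by
      rw [LinearMap.mem_ker, ContinuousLinearMap.coe_coe, comp_apply, hE' x, hx]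
    have h1 : @inner ℂ _ _ (E x) (E x) = 0 :=
      inner_right_of_mem_orthogonal hmem (hErange ⟨x, rfl⟩)
    exact inner_self_eq_zero.mp h1
  -- ker blk22 ⊆ ker blk12 (second complementability condition)
  have hker22_12 : ∀ v, blk22 S T A v = 0 → blk12 S T A v = 0 := by
    intro v hv
    have h1 : ∀ y, @inner ℂ _ _ (blk12 S T A v) y = 0 := by
      intro y
      obtain ⟨z, hz⟩ := hc.2 ⟨y, rfl⟩
      have hz : adjoint (blk22 S T A) z = adjoint (blk12 S T A) y := hz
      rw [← adjoint_inner_right, ← hz, adjoint_inner_right, hv, inner_zero_left]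
    exact inner_self_eq_zero.mp (h1 _)
  -- the choice of w for each x
  have hchoice : ∀ x, ∃ w, projC S w = 0 ∧ blk22 S T A w = blk21 S T A x ∧
      adjoint F (E x) = blk12 S T A w := by
    intro x
    obtain ⟨w₀, hw₀⟩ := hc.1 ⟨x, rfl⟩
    refine ⟨w₀ - projC S w₀, ?_⟩
    have harg : (w₀ - projC S w₀) - projC S (w₀ - projC S w₀) = w₀ - projC S w₀ := by
      rw [map_sub, hPP, sub_self, sub_zero]
    have hw : blk22 S T A (w₀ - projC S w₀) = blk21 S T A x := by
      rw [h22, harg, ← h22]; exact hw₀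
    refine ⟨?_, hw, ?_⟩
    · rw [map_sub, hPP, sub_self]
    · have hPw : projC S (w₀ - projC S w₀) = 0 := by rw [map_sub, hPP, sub_self]
      have hBEx : Bh (E x) = Bh (Bh (w₀ - projC S w₀)) := by
        rw [← hkey1 (E x), hE' x, ← hw, hkey2]
      have hsub : adjoint F (E x - Bh (w₀ - projC S w₀)) = 0 :=
        hFker _ (by rw [map_sub, hBEx, sub_self])
      rw [map_sub] at hsub
      have h2 : adjoint F (E x) = adjoint F (Bh (w₀ - projC S w₀)) :=
        sub_eq_zero.mp hsub
      rw [h2, hFB]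
  -- the pointwise representation of As
  have hrep : ∀ x, ∃ w, projC S w = 0 ∧ As x = A (projC S x - w) ∧ As x ∈ T := by
    intro x
    obtain ⟨w, hPw, hw, hFE⟩ := hchoice x
    have hFE' : adjoint F (E x) = projC T (A w) := by
      rw [hFE, h12, hPw, sub_zero]
    refine ⟨w, hPw, ?_, ?_⟩
    · rw [hAs' x, hFE', map_sub]
      have e22 : blk22 S T A w = A w - projC T (A w) := by
        rw [h22, hPw, sub_zero]
      have hthis : A w - projC T (A w) =
          A (projC S x) - projC T (A (projC S x)) := by
        rw [← e22, hw, h21]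
      have habel : projC T (A (projC S x)) - projC T (A w) =
          (A (projC S x) - A w) + ((A w - projC T (A w)) -
            (A (projC S x) - projC T (A (projC S x)))) := by abel
      rw [habel, hthis, sub_self, add_zero]
    · have hformT : As x = projC T (A (projC S x)) - projC T (A w) := by
        rw [hAs' x, hFE']
      rw [hformT]
      exact sub_mem (hQmem _) (hQmem _)
  -- As agrees with A on vectors mapped into T
  have hfix : ∀ u, A u ∈ T → As u = A u := by
    intro u hu
    obtain ⟨w, hPw, hrepu, hmemT⟩ := hrep u
    set v := (u - projC S u) + w with hv
    have hPv : projC S v = 0 := by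
      rw [hv, map_add, map_sub, hPP, sub_self, hPw, add_zero]
    have hQAu : projC T (A u) = A u := hQeq hu
    have hQAs : projC T (As u) = As u := hQeq hmemT
    have hAv : A v = A u - As u := by
      rw [hrepu, ← map_sub]
      congr 1
      rw [hv]; abel
    have h22v : blk22 S T A v = 0 := by
      rw [h22, hPv, sub_zero, hAv, map_sub, hQAu, hQAs, sub_self]
    have h12v : blk12 S T A v = 0 := hker22_12 v h22v
    have e1 : projC T (A v) = 0 := by
      have h3 := h12 v
      rw [hPv, sub_zero] at h3
      rw [← h3, h12v]
    have hAv0 : A v = 0 := by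
      have h4 := h22v
      rw [h22, hPv, sub_zero, e1, sub_zero] at h4
      exact h4
    rw [hAv] at hAv0
    exact (sub_eq_zero.mp hAv0).symm
  -- S-orthogonal vectors are killed by As
  have hSperp : ∀ x ∈ Sᗮ, As x = 0 := by
    intro x hx
    have hPx : projC S x = 0 := hPzero hx
    have h21x : blk21 S T A x = 0 := by
      rw [h21, hPx]; simp
    have hEx : E x = 0 := hEker x h21x
    rw [hAs' x, hPx, hEx]; simp
  constructor
  · apply le_antisymm
    · rintro z ⟨x, rfl⟩
      obtain ⟨w, hPw, h1, h2⟩ := hrep x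
      exact ⟨⟨projC S x - w, h1.symm⟩, h2⟩
    · rintro z ⟨⟨u, rfl⟩, hzT⟩
      exact ⟨u, hfix u hzT⟩
  · apply le_antisymm
    · intro x hx
      obtain ⟨w, hPw, h1, _⟩ := hrep x
      have hxk : A (projC S x - w) = 0 := by
        rw [← h1]; exact LinearMap.mem_ker.mp hx
      have hwS : w ∈ Sᗮ := by
        have h5 := hPsub w
        rwa [hPw, sub_zero] at h5
      have hmem1 : (x - projC S x) + w ∈ Sᗮ := add_mem (hPsub x) hwS
      have hdecomp : x = ((x - projC S x) + w) + (projC S x - w) := by abel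
      rw [hdecomp]
      exact add_mem (mem_sup_left hmem1)
        (mem_sup_right (LinearMap.mem_ker.mpr hxk))
    · apply sup_le
      · intro x hx
        exact LinearMap.mem_ker.mpr (hSperp x hx)
      · intro x hx
        have h6 : A x ∈ T := by
          rw [show A x = 0 from LinearMap.mem_ker.mp hx]; exact zero_mem T
        show As x = 0; rw [hfix x h6]
        exact LinearMap.mem_ker.mp hx
end

section
/- Let A ∈ L(H) be a projection and S, T ⊆ H closed subspaces such that A is (S,T)-complementable. Then N(A) + S⊥ is closed, H = (R(A) ∩ T) ⊕ (N(A) + S⊥) (direct sum, not necessarily orthogonal), and A/(S,T) is the projection onto R(A) ∩ T along N(A) + S⊥. -/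
set_option maxHeartbeats 1000000
set_option synthInstance.maxHeartbeats 400000

open ContinuousLinearMap Submodule

variable {H₁ H₂ : Type*} [NormedAddCommGroup H₁] [InnerProductSpace ℂ H₁] [CompleteSpace H₁]
  [NormedAddCommGroup H₂] [InnerProductSpace ℂ H₂] [CompleteSpace H₂]

section Aux

variable {H : Type*} [NormedAddCommGroup H] [InnerProductSpace ℂ H] [CompleteSpace H]

/-- Uniqueness of the positive square root. -/
theorem aux_sq_unique {p q : H →L[ℂ] H} (hp : p.IsPositive) (hq : q.IsPositive)
    (h : p ∘L p = q ∘L q) : p = q := by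
  have hp' : (0:H →L[ℂ] H) ≤ p := (nonneg_iff_isPositive p).2 hp
  have hq' : (0:H →L[ℂ] H) ≤ q := (nonneg_iff_isPositive q).2 hq
  have h2 : p * p = q * q := h
  calc p = CFC.sqrt (p*p) := (CFC.sqrt_unique rfl hp').symm
    _ = CFC.sqrt (q*q) := by rw [h2]
    _ = q := CFC.sqrt_unique rfl hq'

theorem aux_sq_isPositive {p : H →L[ℂ] H} (hp : IsSelfAdjoint p) : (p ∘L p).IsPositive := by
  constructor
  · exact (isSelfAdjoint_iff'.mpr (by rw [adjoint_comp, hp.adjoint_eq])).isSymmetric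
  · intro x
    have h1 : @inner ℂ _ _ ((p ∘L p) x) x = @inner ℂ _ _ (p x) (p x) := hp.isSymmetric (p x) x
    rw [reApplyInnerSelf_apply, h1]
    exact inner_self_nonneg

theorem aux_proj_mem (S : Submodule ℂ H) [CompleteSpace S] (x : H) : projC S x ∈ S :=
  (orthogonalProjection S x).2

theorem aux_proj_eq_self (S : Submodule ℂ H) [CompleteSpace S] {x : H} (hx : x ∈ S) :
    projC S x = x :=
  Submodule.starProjection_eq_self_iff.2 hx

theorem aux_proj_eq_zero (S : Submodule ℂ H) [CompleteSpace S] {x : H} (hx : x ∈ Sᗮ) :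
    projC S x = 0 := by
  show ((orthogonalProjection S x : S) : H) = 0
  rw [Submodule.orthogonalProjectionOnto_apply_of_mem_orthogonal hx]
  rfl

theorem aux_sub_proj_mem (S : Submodule ℂ H) [CompleteSpace S] (x : H) :
    x - projC S x ∈ Sᗮ :=
  Submodule.sub_starProjection_mem_orthogonal x

end Aux

theorem shorted_of_projection
    {H : Type*} [NormedAddCommGroup H] [InnerProductSpace ℂ H] [CompleteSpace H]
    (A : H →L[ℂ] H) (hA : IsIdempotentElem A)
    (S : Submodule ℂ H) [CompleteSpace S] (T : Submodule ℂ H) [CompleteSpace T]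
    (hc : IsComplementable S T A) (As : H →L[ℂ] H) (hAs : IsShorted S T A As) :
    IsClosed ((LinearMap.ker (A : H →ₗ[ℂ] H) ⊔ Sᗮ : Submodule ℂ H) : Set H) ∧
    IsCompl (LinearMap.range (A : H →ₗ[ℂ] H) ⊓ T) (LinearMap.ker (A : H →ₗ[ℂ] H) ⊔ Sᗮ) ∧
    IsIdempotentElem As ∧
    LinearMap.range (As : H →ₗ[ℂ] H) = LinearMap.range (A : H →ₗ[ℂ] H) ⊓ T ∧
    LinearMap.ker (As : H →ₗ[ℂ] H) = LinearMap.ker (A : H →ₗ[ℂ] H) ⊔ Sᗮ := by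
  obtain ⟨Bh, Dh, U, E, F, hBp, hB4, hDp, hD4, hUB, hkerU, hDUE, hrE, hBF, hrF, hAsEq⟩ := hAs
  have hBsym : ∀ a b : H, @inner ℂ _ _ (Bh a) b = @inner ℂ _ _ a (Bh b) := fun a b =>
    hBp.isSelfAdjoint.isSymmetric a b
  have hAA : ∀ x, A (A x) = A x := fun x => by
    conv_rhs => rw [← hA]
    rfl
  -- pointwise versions of block definitions
  have hb11 : ∀ x, blk11 S T A x = projC T (A (projC S x)) := fun x => by
    simp only [blk11, comp_apply]
  have hb12 : ∀ x, blk12 S T A x = projC T (A (x - projC S x)) := fun x => by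
    simp only [blk12, comp_apply, sub_apply, ContinuousLinearMap.one_apply]
  have hb21 : ∀ x, blk21 S T A x = A (projC S x) - projC T (A (projC S x)) := fun x => by
    simp only [blk21, comp_apply, sub_apply, ContinuousLinearMap.one_apply]
  have hb22 : ∀ x, blk22 S T A x = A (x - projC S x) - projC T (A (x - projC S x)) := fun x => by
    simp only [blk22, comp_apply, sub_apply, ContinuousLinearMap.one_apply]
  -- pointwise versions of the operator hypotheses
  have hUBpt : ∀ x, blk22 S T A x = U (Bh (Bh x)) := fun x => by rw [hUB]; rfl
  have hDUEpt : ∀ x, Dh (U (E x)) = blk21 S T A x := fun x => by rw [← hDUE]; rfl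
  -- inner product identity from Bh⁴ = A22* A22
  have P1 : ∀ x z, @inner ℂ _ _ (blk22 S T A x) (blk22 S T A z)
      = @inner ℂ _ _ (Bh (Bh x)) (Bh (Bh z)) := by
    intro x z
    have h2 : adjoint (blk22 S T A) (blk22 S T A z) = Bh (Bh (Bh (Bh z))) :=
      (DFunLike.congr_fun hB4 z).symm
    calc @inner ℂ _ _ (blk22 S T A x) (blk22 S T A z)
        = @inner ℂ _ _ x (adjoint (blk22 S T A) (blk22 S T A z)) :=
          (adjoint_inner_right _ x _).symm
      _ = @inner ℂ _ _ x (Bh (Bh (Bh (Bh z)))) := by rw [h2]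
      _ = @inner ℂ _ _ (Bh (Bh x)) (Bh (Bh z)) := by simp only [hBsym]
  -- kernels
  have hkerB' : ∀ x, Bh x = 0 → blk22 S T A x = 0 := by
    intro x hx
    have h := P1 x x
    rw [hx, map_zero, inner_zero_left] at h
    exact inner_self_eq_zero.mp h
  have hkerB : ∀ x, blk22 S T A x = 0 → Bh x = 0 := by
    intro x hx
    have h := P1 x x
    rw [hx, inner_zero_left] at h
    have hBB : Bh (Bh x) = 0 := inner_self_eq_zero.mp h.symm
    have h3 : @inner ℂ _ _ (Bh x) (Bh x) = (0:ℂ) := by rw [hBsym, hBB, inner_zero_right]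
    exact inner_self_eq_zero.mp h3
  have hkerU' : ∀ x, Bh x = 0 → U x = 0 := fun x hx => hkerU x (hkerB' x hx)
  -- U* U = 1 on range (Bh ∘ Bh)
  have I1 : ∀ x, adjoint U (U (Bh (Bh x))) = Bh (Bh x) := by
    intro x
    set d := adjoint U (U (Bh (Bh x))) - Bh (Bh x) with hddef
    have hd1 : ∀ z, @inner ℂ _ _ d (Bh (Bh z)) = 0 := by
      intro z
      rw [hddef, inner_sub_left, adjoint_inner_left, ← hUBpt, ← hUBpt, P1, sub_self]
    have hd2 : Bh d = 0 := by
      have h := hd1 d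
      exact inner_self_eq_zero.mp ((hBsym d (Bh d)).trans h)
    have hUd : U d = 0 := hkerU' _ hd2
    have hdd : @inner ℂ _ _ d d = (0:ℂ) := by
      rw [hddef, inner_sub_left]
      rw [show @inner ℂ _ _ (adjoint U (U (Bh (Bh x)))) d = @inner ℂ _ _ (U (Bh (Bh x))) (U d)
        from adjoint_inner_left U d (U (Bh (Bh x)))]
      rw [hUd, inner_zero_right, hBsym, hd2, inner_zero_right, sub_self]
    have : d = 0 := inner_self_eq_zero.mp hdd
    exact sub_eq_zero.mp (hddef ▸ this)
  -- extend to range Bh by a closure argument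
  have hsub1 : LinearMap.range ((Bh ∘L Bh : H →L[ℂ] H) : H →ₗ[ℂ] H) ≤
      LinearMap.ker (((adjoint U ∘L U) - (1 : H →L[ℂ] H) : H →L[ℂ] H) : H →ₗ[ℂ] H) := by
    rintro _ ⟨x, rfl⟩
    simp only [LinearMap.mem_ker, ContinuousLinearMap.coe_coe, sub_apply, comp_apply, ContinuousLinearMap.one_apply]
    rw [I1, sub_self]
  have hsub2 : LinearMap.range (Bh : H →ₗ[ℂ] H) ≤
      (LinearMap.range ((Bh ∘L Bh : H →L[ℂ] H) : H →ₗ[ℂ] H)).topologicalClosure := by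
    rw [← Submodule.orthogonal_orthogonal_eq_closure]
    rintro _ ⟨x, rfl⟩
    refine (Submodule.mem_orthogonal _ _).mpr ?_
    intro y hy
    have h1 : ∀ z, @inner ℂ _ _ (Bh (Bh z)) y = 0 := fun z =>
      (Submodule.mem_orthogonal _ y).mp hy _ ⟨z, rfl⟩
    have h2 : Bh (Bh y) = 0 := by
      have h3 : ∀ z, @inner ℂ _ _ z (Bh (Bh y)) = (0:ℂ) := by
        intro z
        have := h1 z
        rwa [hBsym, hBsym] at this
      exact inner_self_eq_zero.mp (h3 (Bh (Bh y)))
    have h4 : Bh y = 0 := by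
      have h5 : @inner ℂ _ _ (Bh y) (Bh y) = (0:ℂ) := by rw [hBsym, h2, inner_zero_right]
      exact inner_self_eq_zero.mp h5
    rw [ContinuousLinearMap.coe_coe, ← hBsym y x, h4, inner_zero_left]
  have I2 : ∀ x, adjoint U (U (Bh x)) = Bh x := by
    intro x
    have hmem : Bh x ∈ LinearMap.ker (((adjoint U ∘L U) - (1 : H →L[ℂ] H) : H →L[ℂ] H) : H →ₗ[ℂ] H) :=
      Submodule.topologicalClosure_minimal _ hsub1 (isClosed_ker _) (hsub2 ⟨x, rfl⟩)
    have h := LinearMap.mem_ker.mp hmem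
    simp only [ContinuousLinearMap.coe_coe, sub_apply, comp_apply, ContinuousLinearMap.one_apply, sub_eq_zero] at h
    exact h
  have hBU : ∀ v, Bh (adjoint U (U v)) = Bh v := by
    intro v
    have hkey : ∀ y, @inner ℂ _ _ (Bh (adjoint U (U v)) - Bh v) y = 0 := by
      intro y
      rw [inner_sub_left]
      have c1 : @inner ℂ _ _ (Bh (adjoint U (U v))) y = @inner ℂ _ _ (U v) (U (Bh y)) := by
        rw [hBsym]
        exact adjoint_inner_left U (Bh y) (U v)
      have c2 : @inner ℂ _ _ (U v) (U (Bh y)) = @inner ℂ _ _ v (Bh y) := by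
        rw [← adjoint_inner_right U, I2]
      rw [c1, c2, ← hBsym, sub_self]
    exact sub_eq_zero.mp (inner_self_eq_zero.mp (hkey _))
  have hUinj : ∀ v, U (Bh v) = 0 → Bh v = 0 := by
    intro v hv
    have h2 : @inner ℂ _ _ (adjoint U (U (Bh v))) (Bh v)
        = @inner ℂ _ _ (U (Bh v)) (U (Bh v)) := adjoint_inner_left U (Bh v) (U (Bh v))
    rw [I2 v, hv, inner_zero_left] at h2
    exact inner_self_eq_zero.mp h2
  -- Dh ∘ U = U ∘ Bh via uniqueness of positive square roots
  have hA22adjpt : ∀ y, adjoint (blk22 S T A) y = Bh (Bh (adjoint U y)) := by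
    intro y
    rw [hUB, adjoint_comp, adjoint_comp, hBp.isSelfAdjoint.adjoint_eq]
    rfl
  have hXpos : (U ∘L (Bh ∘L Bh) ∘L adjoint U).IsPositive :=
    (aux_sq_isPositive hBp.isSelfAdjoint).conj_adjoint U
  have hYpos : (U ∘L Bh ∘L adjoint U).IsPositive := hBp.conj_adjoint U
  have hDDpos : (Dh ∘L Dh).IsPositive := aux_sq_isPositive hDp.isSelfAdjoint
  have hX2 : (U ∘L (Bh ∘L Bh) ∘L adjoint U) ∘L (U ∘L (Bh ∘L Bh) ∘L adjoint U)
      = (Dh ∘L Dh) ∘L (Dh ∘L Dh) := by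
    ext y
    have hR : ((Dh ∘L Dh) ∘L (Dh ∘L Dh)) y = Dh (Dh (Dh (Dh y))) := rfl
    have hD4pt : Dh (Dh (Dh (Dh y))) = blk22 S T A (adjoint (blk22 S T A) y) :=
      DFunLike.congr_fun hD4 y
    have hL : ((U ∘L (Bh ∘L Bh) ∘L adjoint U) ∘L (U ∘L (Bh ∘L Bh) ∘L adjoint U)) y
        = U (Bh (Bh (adjoint U (U (Bh (Bh (adjoint U y))))))) := rfl
    rw [hL, hR, hD4pt, hA22adjpt, hUBpt, I1]
  have hXDD : U ∘L (Bh ∘L Bh) ∘L adjoint U = Dh ∘L Dh := aux_sq_unique hXpos hDDpos hX2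
  have hY2 : (U ∘L Bh ∘L adjoint U) ∘L (U ∘L Bh ∘L adjoint U) = Dh ∘L Dh := by
    rw [← hXDD]
    ext y
    have hL : ((U ∘L Bh ∘L adjoint U) ∘L (U ∘L Bh ∘L adjoint U)) y
        = U (Bh (adjoint U (U (Bh (adjoint U y))))) := rfl
    have hR : (U ∘L (Bh ∘L Bh) ∘L adjoint U) y = U (Bh (Bh (adjoint U y))) := rfl
    rw [hL, hR, hBU]
  have hYD : U ∘L Bh ∘L adjoint U = Dh := aux_sq_unique hYpos hDp hY2
  have hDU : ∀ v, Dh (U v) = U (Bh v) := by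
    intro v
    rw [← hYD]
    have : (U ∘L Bh ∘L adjoint U) (U v) = U (Bh (adjoint U (U v))) := rfl
    rw [this, hBU]
  -- the key Douglas-solution computation
  have L1 : ∀ x w, blk22 S T A w = blk21 S T A x →
      adjoint F (E x) = blk12 S T A w := by
    intro x w hw
    have h1 : Dh (U (E x)) = U (Bh (Bh w)) := by rw [hDUEpt, ← hw, hUBpt]
    have h2 : U (Bh (E x - Bh w)) = 0 := by
      rw [map_sub, map_sub, ← hDU (E x), h1, sub_self]
    have h3 : Bh (E x - Bh w) = 0 := hUinj _ h2
    have h4 : adjoint F (E x - Bh w) = 0 := by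
      have hall : ∀ y, @inner ℂ _ _ (adjoint F (E x - Bh w)) y = 0 := by
        intro y
        rw [adjoint_inner_left]
        exact (Submodule.mem_orthogonal _ _).mp (hrF ⟨y, rfl⟩) _ (LinearMap.mem_ker.mpr h3)
      exact inner_self_eq_zero.mp (hall _)
    have h5 : adjoint F (E x) = adjoint F (Bh w) := by
      rw [map_sub] at h4
      exact sub_eq_zero.mp h4
    have h6 : adjoint F (Bh w) = blk12 S T A w := by
      have h7 := DFunLike.congr_fun (congrArg adjoint hBF) w
      rw [adjoint_comp, adjoint_adjoint, hBp.isSelfAdjoint.adjoint_eq] at h7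
      exact h7
    rw [h5, h6]
  have L2 : ∀ v, blk22 S T A v = 0 → blk12 S T A v = 0 := by
    intro v hv
    have hall : ∀ y, @inner ℂ _ _ (blk12 S T A v) y = 0 := by
      intro y
      obtain ⟨c, hc2⟩ := hc.2 ⟨y, rfl⟩
      calc @inner ℂ _ _ (blk12 S T A v) y
          = @inner ℂ _ _ v (adjoint (blk12 S T A) y) := (adjoint_inner_right _ v y).symm
        _ = @inner ℂ _ _ v (adjoint (blk22 S T A) c) := by
          simp only [ContinuousLinearMap.coe_coe] at hc2; rw [hc2]
        _ = @inner ℂ _ _ (blk22 S T A v) c := adjoint_inner_right _ v c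
        _ = 0 := by rw [hv, inner_zero_left]
    exact inner_self_eq_zero.mp (hall _)
  -- the key structural lemma
  have key : ∀ x w, blk22 S T A w = blk21 S T A x →
      As x = A (projC S x - (w - projC S w)) ∧
      projC T (A (projC S x - (w - projC S w))) = A (projC S x - (w - projC S w)) := by
    intro x w hw
    have hL1 := L1 x w hw
    have e0 : As x = blk11 S T A x - adjoint F (E x) := by
      rw [hAsEq]; simp
    have e1 : As x = projC T (A (projC S x)) - projC T (A (w - projC S w)) := by
      rw [e0, hL1, hb11, hb12]
    have e2 : A (projC S x - (w - projC S w)) = A (projC S x) - A (w - projC S w) :=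
      map_sub A _ _
    have e4 : A (projC S x) - projC T (A (projC S x))
        = A (w - projC S w) - projC T (A (w - projC S w)) := by
      rw [← hb21, ← hb22, hw]
    have e5 : A (projC S x) - A (w - projC S w)
        = projC T (A (projC S x)) - projC T (A (w - projC S w)) := by
      rw [sub_eq_sub_iff_sub_eq_sub]
      exact e4
    constructor
    · rw [e1, ← e5, ← e2]
    · rw [e2, map_sub, e5]
  have getW : ∀ x, ∃ w, blk22 S T A w = blk21 S T A x := fun x =>
    hc.1 ⟨x, rfl⟩
  -- As is the identity on range A ⊓ T
  have hfix : ∀ v, A v = v → v ∈ T → As v = v := by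
    intro v hv1 hvT
    obtain ⟨w, hw⟩ := getW v
    obtain ⟨k1, k2⟩ := key v w hw
    have hz : (v - projC S v) + (w - projC S w) ∈ Sᗮ :=
      Submodule.add_mem _ (aux_sub_proj_mem S v) (aux_sub_proj_mem S w)
    have hPz0 : projC S ((v - projC S v) + (w - projC S w)) = 0 := aux_proj_eq_zero S hz
    have hAz : A ((v - projC S v) + (w - projC S w))
        = v - A (projC S v - (w - projC S w)) := by
      simp only [map_add, map_sub, hv1]
      abel
    have hz' : ((v - projC S v) + (w - projC S w))
        - projC S ((v - projC S v) + (w - projC S w))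
        = (v - projC S v) + (w - projC S w) := by rw [hPz0, sub_zero]
    have hQ2 : projC T (v - A (projC S v - (w - projC S w)))
        = v - A (projC S v - (w - projC S w)) := by
      rw [map_sub (projC T) v (A (projC S v - (w - projC S w))), aux_proj_eq_self T hvT, k2]
    have h22z : blk22 S T A ((v - projC S v) + (w - projC S w)) = 0 := by
      rw [hb22, hz', hAz, hQ2, sub_self]
    have h12z := L2 _ h22z
    rw [hb12, hz', hAz, hQ2] at h12z
    rw [k1]
    exact (sub_eq_zero.mp h12z).symm
  -- membership facts for arbitrary x
  have hmem : ∀ x, As x ∈ LinearMap.range (A : H →ₗ[ℂ] H) ∧ As x ∈ T ∧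
      x - As x ∈ (LinearMap.ker (A : H →ₗ[ℂ] H) ⊔ Sᗮ : Submodule ℂ H) := by
    intro x
    obtain ⟨w, hw⟩ := getW x
    obtain ⟨k1, k2⟩ := key x w hw
    refine ⟨⟨projC S x - (w - projC S w), k1.symm⟩, ?_, ?_⟩
    · rw [k1, ← k2]
      exact aux_proj_mem T _
    · have hdecomp : x - As x =
        ((projC S x - (w - projC S w)) - A (projC S x - (w - projC S w)))
        + ((x - projC S x) + (w - projC S w)) := by
        rw [k1]; abel
      rw [hdecomp]
      refine Submodule.add_mem_sup ?_
        (Submodule.add_mem _ (aux_sub_proj_mem S x) (aux_sub_proj_mem S w))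
      rw [LinearMap.mem_ker, ContinuousLinearMap.coe_coe, map_sub, hAA, sub_self]
  -- As vanishes on ker A ⊔ Sᗮ
  have hzero : ∀ v ∈ (LinearMap.ker (A : H →ₗ[ℂ] H) ⊔ Sᗮ : Submodule ℂ H), As v = 0 := by
    intro v hv
    rw [Submodule.mem_sup] at hv
    obtain ⟨y, hy, z, hz, rfl⟩ := hv
    have hAy : A y = 0 := LinearMap.mem_ker.mp hy
    have hy0 : As y = 0 := by
      have hwitness : blk22 S T A (-y) = blk21 S T A y := by
        rw [hb22, hb21]
        have hne : (-y : H) - projC S (-y) = -(y - projC S y) := by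
          rw [map_neg]; abel
        rw [hne, map_neg, map_sub, hAy, zero_sub, neg_neg]
      obtain ⟨k1, _⟩ := key y (-y) hwitness
      have hu : projC S y - ((-y) - projC S (-y)) = y := by
        rw [map_neg]; abel
      rw [k1, hu, hAy]
    have hz0 : As z = 0 := by
      have hwitness : blk22 S T A 0 = blk21 S T A z := by
        rw [hb22, hb21, aux_proj_eq_zero S hz]
        simp
      obtain ⟨k1, _⟩ := key z 0 hwitness
      have hu : projC S z - ((0:H) - projC S 0) = 0 := by
        rw [aux_proj_eq_zero S hz, map_zero]
        abel
      rw [k1, hu, map_zero]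
    rw [map_add, hy0, hz0, add_zero]
  have hfix' : ∀ v ∈ LinearMap.range (A : H →ₗ[ℂ] H) ⊓ T, As v = v := by
    rintro v ⟨⟨a, ha⟩, hvT⟩
    exact hfix v (by rw [← ha]; exact hAA a) hvT
  have hker5 : LinearMap.ker (As : H →ₗ[ℂ] H) = LinearMap.ker (A : H →ₗ[ℂ] H) ⊔ Sᗮ := by
    apply le_antisymm
    · intro x hx
      have h0 : As x = 0 := LinearMap.mem_ker.mp hx
      have h3 := (hmem x).2.2
      rwa [h0, sub_zero] at h3
    · intro v hv
      exact LinearMap.mem_ker.mpr (hzero v hv)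
  have hrange5 : LinearMap.range (As : H →ₗ[ℂ] H) = LinearMap.range (A : H →ₗ[ℂ] H) ⊓ T := by
    apply le_antisymm
    · rintro _ ⟨x, rfl⟩
      exact Submodule.mem_inf.mpr ⟨(hmem x).1, (hmem x).2.1⟩
    · intro v hv
      exact ⟨v, hfix' v hv⟩
  refine ⟨?_, ?_, ?_, hrange5, hker5⟩
  · rw [← hker5]
    exact isClosed_ker As
  · constructor
    · rw [Submodule.disjoint_def]
      intro v hv1 hv2
      have h := hfix' v hv1
      rw [hzero v hv2] at h
      exact h.symm
    · rw [codisjoint_iff, eq_top_iff]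
      intro x _
      have h1 : As x + (x - As x) ∈ LinearMap.range (A : H →ₗ[ℂ] H) ⊓ T ⊔ (LinearMap.ker (A : H →ₗ[ℂ] H) ⊔ Sᗮ) :=
        Submodule.add_mem_sup (Submodule.mem_inf.mpr ⟨(hmem x).1, (hmem x).2.1⟩) (hmem x).2.2
      rwa [add_sub_cancel] at h1
  · refine ContinuousLinearMap.ext fun x => ?_
    show As (As x) = As x
    exact hfix' (As x) (Submodule.mem_inf.mpr ⟨(hmem x).1, (hmem x).2.1⟩)
end
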